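/- Let X be a Banach space and suppose that for every norm-one functional x* ∈ X* and every β > 0, the set C = (1/2)S(x*, β) + (1/2)S(−x*, β) has the property that for every δ > 0 and every x ∈ C there exists y ∈ C with ‖x − y‖ > 1 + ‖x‖ − δ. Then for every norm-one functional x* ∈ X*, every α > 0, every ε > 0 and every x in the unit sphere S_X, there exists s ∈ B_X with Re x*(s) > 1 − α and ‖x − s‖ > 2 − ε. -/

import Mathlib

/-- The slice `S(f, β)` of the closed unit ball of `X` determined by a functional `f`
and `β > 0`: the set of points `x` of the closed unit ball with `Re (f x) > 1 - β`. -/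
def ballSlice {𝕜 : Type*} [RCLike 𝕜] {X : Type*} [NormedAddCommGroup X] [NormedSpace 𝕜 X]
    (f : X →L[𝕜] 𝕜) (β : ℝ) : Set X :=
  {x : X | ‖x‖ ≤ 1 ∧ 1 - β < RCLike.re (f x)}

set_option maxHeartbeats 1000000

/-- Suppose that in a Banach space `X`, for every norm-one functional `f` and every
`β > 0`, the set `C = ½·S(f, β) + ½·S(-f, β)` has the property that for every `δ > 0`
and every `x ∈ C` there is `y ∈ C` with `‖x - y‖ > 1 + ‖x‖ - δ`. Then for every
norm-one functional `f`, every `α > 0`, every `ε > 0` and every `x` of norm one there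
is `s` in the closed unit ball with `Re (f s) > 1 - α` and `‖x - s‖ > 2 - ε`. -/
theorem diametral_on_symmetric_combinations_implies_slice_daugavet
    {𝕜 : Type*} [RCLike 𝕜] {X : Type*}
    [NormedAddCommGroup X] [NormedSpace 𝕜 X] [CompleteSpace X]
    (h : ∀ (f : X →L[𝕜] 𝕜), ‖f‖ = 1 → ∀ β > (0 : ℝ), ∀ δ > (0 : ℝ),
      ∀ x ∈ {z : X | ∃ y₁ ∈ ballSlice f β, ∃ y₂ ∈ ballSlice (-f) β,
        z = ((2 : 𝕜)⁻¹) • y₁ + ((2 : 𝕜)⁻¹) • y₂},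
      ∃ y ∈ {z : X | ∃ y₁ ∈ ballSlice f β, ∃ y₂ ∈ ballSlice (-f) β,
        z = ((2 : 𝕜)⁻¹) • y₁ + ((2 : 𝕜)⁻¹) • y₂},
      ‖x - y‖ > 1 + ‖x‖ - δ)
    (f : X →L[𝕜] 𝕜) (hf : ‖f‖ = 1) (α : ℝ) (hα : 0 < α)
    (ε : ℝ) (hε : 0 < ε) (x : X) (hx : ‖x‖ = 1) :
    ∃ s : X, ‖s‖ ≤ 1 ∧ 1 - α < RCLike.re (f s) ∧ 2 - ε < ‖x - s‖ := by
  classical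
  set A : ℝ := min α 1 with hA
  set E : ℝ := min ε 1 with hE
  have hA0 : 0 < A := lt_min hα one_pos
  have hA1 : A ≤ 1 := min_le_right _ _
  have hAα : A ≤ α := min_le_left _ _
  have hE0 : 0 < E := lt_min hε one_pos
  have hE1 : E ≤ 1 := min_le_right _ _
  have hEε : E ≤ ε := min_le_left _ _
  -- a point deep in the slice
  obtain ⟨p, hp1, hp2⟩ : ∃ p : X, ‖p‖ ≤ 1 ∧ 1 - A / 2 < RCLike.re (f p) := by
    have h1 : ¬ (‖f‖ ≤ 1 - A / 2) := by rw [hf]; intro hcon; linarith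
    have h2 : ∃ z : X, (1 - A / 2) * ‖z‖ < ‖f z‖ := by
      by_contra hc
      push_neg at hc
      exact h1 (f.opNorm_le_bound (by linarith) (fun z => hc z))
    obtain ⟨z, hz⟩ := h2
    have hz0 : z ≠ 0 := by
      rintro rfl
      simp only [norm_zero, mul_zero, map_zero] at hz
      exact lt_irrefl 0 hz
    have hzpos : 0 < ‖z‖ := norm_pos_iff.2 hz0
    have hfz : f z ≠ 0 := by
      intro h0
      rw [h0, norm_zero] at hz
      nlinarith
    have hfzpos : 0 < ‖f z‖ := norm_pos_iff.2 hfz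
    refine ⟨((‖f z‖ : 𝕜) / ((‖z‖ : 𝕜) * f z)) • z, ?_, ?_⟩
    · have hnz : ((‖z‖ : ℝ) : 𝕜) ≠ 0 := by
        simp only [ne_eq, RCLike.ofReal_eq_zero]; exact ne_of_gt hzpos
      have hz1 : ‖z‖ ≠ 0 := ne_of_gt hzpos
      have hz2 : ‖f z‖ ≠ 0 := ne_of_gt hfzpos
      have : ‖((‖f z‖ : 𝕜) / ((‖z‖ : 𝕜) * f z)) • z‖ = 1 := by
        rw [norm_smul, norm_div, norm_mul, RCLike.norm_ofReal, RCLike.norm_ofReal,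
          abs_of_pos hfzpos, abs_of_pos hzpos]
        field_simp
      exact le_of_eq this
    · have hnz : ((‖z‖ : ℝ) : 𝕜) ≠ 0 := by
        simp only [ne_eq, RCLike.ofReal_eq_zero]; exact ne_of_gt hzpos
      have : f (((‖f z‖ : 𝕜) / ((‖z‖ : 𝕜) * f z)) • z)
          = ((‖f z‖ / ‖z‖ : ℝ) : 𝕜) := by
        rw [map_smul, smul_eq_mul]
        field_simp
        push_cast
        field_simp
      rw [this, RCLike.ofReal_re]
      rw [lt_div_iff₀ hzpos]
      linarith [hz]
  set t : ℝ := A / 8 with htdef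
  have ht0 : 0 < t := by positivity
  have ht18 : t ≤ 1 / 8 := by rw [htdef]; linarith
  set δ : ℝ := t * E / 4 with hδdef
  have hδ0 : 0 < δ := by positivity
  have hδ1 : δ < 1 := by nlinarith
  -- bounds on re (f x), re (f p)
  have hfx : |RCLike.re (f x)| ≤ 1 := by
    calc |RCLike.re (f x)| ≤ ‖f x‖ := RCLike.abs_re_le_norm _
    _ ≤ ‖f‖ * ‖x‖ := f.le_opNorm x
    _ = 1 := by rw [hf, hx, one_mul]
  have hfx1 : RCLike.re (f x) ≤ 1 := le_trans (le_abs_self _) hfx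
  have hfx2 : -1 ≤ RCLike.re (f x) := by
    have := neg_abs_le (RCLike.re (f x)); linarith
  -- the two slice points whose midpoint is t • x
  set Y1 : X := ((t : ℝ) : 𝕜) • x + ((1 - t : ℝ) : 𝕜) • p with hY1def
  set Y2 : X := ((t : ℝ) : 𝕜) • x - ((1 - t : ℝ) : 𝕜) • p with hY2def
  have hY1n : ‖Y1‖ ≤ 1 := by
    calc ‖Y1‖ ≤ ‖((t : ℝ) : 𝕜) • x‖ + ‖((1 - t : ℝ) : 𝕜) • p‖ := norm_add_le _ _
    _ = |t| * ‖x‖ + |1 - t| * ‖p‖ := by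
        rw [norm_smul, norm_smul, RCLike.norm_ofReal, RCLike.norm_ofReal]
    _ ≤ t * 1 + (1 - t) * 1 := by
        rw [abs_of_pos ht0, abs_of_pos (by linarith : (0:ℝ) < 1 - t), hx]
        have : (1 - t) * ‖p‖ ≤ (1 - t) * 1 :=
          mul_le_mul_of_nonneg_left hp1 (by linarith)
        linarith
    _ = 1 := by ring
  have hY2n : ‖Y2‖ ≤ 1 := by
    calc ‖Y2‖ ≤ ‖((t : ℝ) : 𝕜) • x‖ + ‖((1 - t : ℝ) : 𝕜) • p‖ := norm_sub_le _ _
    _ = |t| * ‖x‖ + |1 - t| * ‖p‖ := by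
        rw [norm_smul, norm_smul, RCLike.norm_ofReal, RCLike.norm_ofReal]
    _ ≤ t * 1 + (1 - t) * 1 := by
        rw [abs_of_pos ht0, abs_of_pos (by linarith : (0:ℝ) < 1 - t), hx]
        have : (1 - t) * ‖p‖ ≤ (1 - t) * 1 :=
          mul_le_mul_of_nonneg_left hp1 (by linarith)
        linarith
    _ = 1 := by ring
  have hY1re : RCLike.re (f Y1) = t * RCLike.re (f x) + (1 - t) * RCLike.re (f p) := by
    have : f Y1 = ((t : ℝ) : 𝕜) * f x + ((1 - t : ℝ) : 𝕜) * f p := by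
      rw [hY1def, map_add, map_smul, map_smul, smul_eq_mul, smul_eq_mul]
    rw [this, map_add RCLike.re (((t : ℝ) : 𝕜) * f x) (((1 - t : ℝ) : 𝕜) * f p),
      RCLike.re_ofReal_mul, RCLike.re_ofReal_mul]
  have hY2re : RCLike.re ((-f) Y2) = -(t * RCLike.re (f x)) + (1 - t) * RCLike.re (f p) := by
    have h1 : f Y2 = ((t : ℝ) : 𝕜) * f x - ((1 - t : ℝ) : 𝕜) * f p := by
      rw [hY2def, map_sub, map_smul, map_smul, smul_eq_mul, smul_eq_mul]
    have h2 : (-f) Y2 = -(f Y2) := by simp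
    have h4 : RCLike.re (f Y2) = t * RCLike.re (f x) - (1 - t) * RCLike.re (f p) := by
      rw [h1, map_sub RCLike.re (((t : ℝ) : 𝕜) * f x) (((1 - t : ℝ) : 𝕜) * f p),
        RCLike.re_ofReal_mul, RCLike.re_ofReal_mul]
    rw [h2, map_neg RCLike.re (f Y2), h4]
    ring
  have hY1mem : Y1 ∈ ballSlice f A := by
    refine ⟨hY1n, ?_⟩
    rw [hY1re]
    nlinarith [hp2, hfx2, hA0, hA1]
  have hY2mem : Y2 ∈ ballSlice (-f) A := by
    refine ⟨hY2n, ?_⟩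
    rw [hY2re]
    nlinarith [hp2, hfx1, hA0, hA1]
  -- t • x is the midpoint
  have hmid : ((t : ℝ) : 𝕜) • x = ((2 : 𝕜)⁻¹) • Y1 + ((2 : 𝕜)⁻¹) • Y2 := by
    rw [hY1def, hY2def]
    have h2ne : (2 : 𝕜) ≠ 0 := by norm_num
    set a : X := ((t : ℝ) : 𝕜) • x
    set b : X := ((1 - t : ℝ) : 𝕜) • p
    calc a = (2 : 𝕜)⁻¹ • ((2 : 𝕜) • a) := by
          rw [smul_smul, inv_mul_cancel₀ h2ne, one_smul]
    _ = (2 : 𝕜)⁻¹ • ((a + b) + (a - b)) := by rw [two_smul]; abel_nf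
    _ = (2 : 𝕜)⁻¹ • (a + b) + (2 : 𝕜)⁻¹ • (a - b) := smul_add _ _ _
  have hc₀mem : ((t : ℝ) : 𝕜) • x ∈ {z : X | ∃ y₁ ∈ ballSlice f A, ∃ y₂ ∈ ballSlice (-f) A,
      z = ((2 : 𝕜)⁻¹) • y₁ + ((2 : 𝕜)⁻¹) • y₂} :=
    ⟨Y1, hY1mem, Y2, hY2mem, hmid⟩
  obtain ⟨y₀, hy₀mem, hfar⟩ := h f hf A hA0 δ hδ0 _ hc₀mem
  obtain ⟨A₀, hA₀, B₀, hB₀, hy₀eq⟩ := hy₀mem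
  set c₀ : X := ((t : ℝ) : 𝕜) • x with hc₀def
  have hnc₀ : ‖c₀‖ = t := by
    rw [hc₀def, norm_smul, RCLike.norm_ofReal, abs_of_pos ht0, hx, mul_one]
  have hfar' : ‖c₀ - y₀‖ > 1 + t - δ := by
    have := hfar
    rw [hnc₀] at this
    exact this
  have hpos : (0 : ℝ) < ‖c₀ - y₀‖ := by linarith
  have hne : c₀ - y₀ ≠ 0 := by
    intro h0
    rw [h0, norm_zero] at hpos
    exact lt_irrefl 0 hpos
  obtain ⟨g, hg1, hgz⟩ := exists_dual_vector 𝕜 (c₀ - y₀) (norm_ne_zero_iff.2 hne)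
  -- norm bound helper
  have gbound : ∀ w : X, |RCLike.re (g w)| ≤ ‖w‖ := by
    intro w
    calc |RCLike.re (g w)| ≤ ‖g w‖ := RCLike.abs_re_le_norm _
    _ ≤ ‖g‖ * ‖w‖ := g.le_opNorm w
    _ = ‖w‖ := by rw [hg1, one_mul]
  -- the key inequality
  have hkey : RCLike.re (g c₀) - RCLike.re (g y₀) > 1 + t - δ := by
    have h1 : RCLike.re (g (c₀ - y₀)) = ‖c₀ - y₀‖ := by
      rw [hgz, RCLike.ofReal_re]
    rw [map_sub g c₀ y₀, map_sub RCLike.re (g c₀) (g y₀)] at h1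
    linarith
  have hgc₀ : RCLike.re (g c₀) = t * RCLike.re (g x) := by
    rw [hc₀def, map_smul, smul_eq_mul, RCLike.re_ofReal_mul]
  have hgx1 : RCLike.re (g x) ≤ 1 := by
    have := gbound x; rw [hx] at this; exact le_trans (le_abs_self _) this
  have hy₀n : ‖y₀‖ ≤ 1 := by
    have h2inv : ((2 : 𝕜))⁻¹ = (((2 : ℝ)⁻¹ : ℝ) : 𝕜) := by push_cast; ring
    rw [hy₀eq]
    calc ‖(2 : 𝕜)⁻¹ • A₀ + (2 : 𝕜)⁻¹ • B₀‖
        ≤ ‖(2 : 𝕜)⁻¹ • A₀‖ + ‖(2 : 𝕜)⁻¹ • B₀‖ := norm_add_le _ _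
    _ = ‖(2:𝕜)⁻¹‖ * ‖A₀‖ + ‖(2:𝕜)⁻¹‖ * ‖B₀‖ := by rw [norm_smul, norm_smul]
    _ ≤ 2⁻¹ * 1 + 2⁻¹ * 1 := by
        rw [h2inv, RCLike.norm_ofReal]
        have hA₀n := hA₀.1
        have hB₀n := hB₀.1
        have : |(2:ℝ)⁻¹| = 2⁻¹ := by norm_num
        rw [this]
        have h1 : (2:ℝ)⁻¹ * ‖A₀‖ ≤ 2⁻¹ * 1 := by
          apply mul_le_mul_of_nonneg_left hA₀n; norm_num
        have h2 : (2:ℝ)⁻¹ * ‖B₀‖ ≤ 2⁻¹ * 1 := by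
          apply mul_le_mul_of_nonneg_left hB₀n; norm_num
        linarith
    _ = 1 := by norm_num
  have hgy₀low : -1 ≤ RCLike.re (g y₀) := by
    have h1 := gbound y₀
    have h2 := neg_abs_le (RCLike.re (g y₀))
    linarith
  -- extract: re (g x) > 1 - δ/t  and  re (g y₀) < -1 + δ
  have hgxbig : RCLike.re (g x) > 1 - δ / t := by
    have h1 : t * RCLike.re (g x) > t - δ := by
      rw [hgc₀] at hkey; linarith
    have hd : δ / t * t = δ := div_mul_cancel₀ _ (ne_of_gt ht0)
    nlinarith
  have hgy₀small : RCLike.re (g y₀) < -1 + δ := by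
    have h1 : t * RCLike.re (g x) ≤ t := by nlinarith
    rw [hgc₀] at hkey; linarith
  -- re (g A₀) < -1 + 2δ
  have hgA₀ : RCLike.re (g A₀) < -1 + 2 * δ := by
    have h2inv : ((2 : 𝕜))⁻¹ = (((2 : ℝ)⁻¹ : ℝ) : 𝕜) := by push_cast; ring
    have h1 : g y₀ = ((2:𝕜)⁻¹) * g A₀ + ((2:𝕜)⁻¹) * g B₀ := by
      rw [hy₀eq, map_add, map_smul, map_smul, smul_eq_mul, smul_eq_mul]
    have h2 : RCLike.re (g y₀)
        = (2:ℝ)⁻¹ * RCLike.re (g A₀) + (2:ℝ)⁻¹ * RCLike.re (g B₀) := by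
      rw [h1, map_add RCLike.re ((2:𝕜)⁻¹ * g A₀) ((2:𝕜)⁻¹ * g B₀), h2inv,
        RCLike.re_ofReal_mul, RCLike.re_ofReal_mul]
    have h3 : -1 ≤ RCLike.re (g B₀) := by
      have ha := gbound B₀
      have hb := neg_abs_le (RCLike.re (g B₀))
      have hc := hB₀.1
      linarith
    rw [h2] at hgy₀small
    linarith
  -- conclusion
  refine ⟨A₀, hA₀.1, ?_, ?_⟩
  · have := hA₀.2
    linarith
  · have h1 : RCLike.re (g (x - A₀)) ≤ ‖x - A₀‖ := by
      have := gbound (x - A₀)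
      have := le_abs_self (RCLike.re (g (x - A₀)))
      linarith
    have h2 : RCLike.re (g (x - A₀)) = RCLike.re (g x) - RCLike.re (g A₀) := by
      rw [map_sub g x A₀, map_sub RCLike.re (g x) (g A₀)]
    have h3 : δ / t = E / 4 := by
      rw [hδdef]; field_simp
    have h4 : 2 * δ ≤ E / 16 := by nlinarith
    have h5 : RCLike.re (g x) - RCLike.re (g A₀) > 2 - E / 4 - E / 16 := by
      rw [h3] at hgxbig
      linarith
    have h6 : 2 - E / 4 - E / 16 > 2 - ε := by linarith
    linarith
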